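/- Let X be a complex Banach space and T a supercyclic bounded linear operator on X, i.e. there exists x ∈ X such that the homogeneous orbit {λ Tⁿ x : λ ∈ ℂ, n ∈ ℕ} is dense in X. Then the descent spectrum of T coincides with its essential descent spectrum: σ_desc(T) = σ_desc^e(T). -/

import Mathlib

noncomputable section

variable {X : Type*} [NormedAddCommGroup X] [NormedSpace ℂ X]

/-- `T - λ·I`. -/
def shiftOp (T : X →L[ℂ] X) (l : ℂ) : X →L[ℂ] X := T - l • (1 : X →L[ℂ] X)

/-- The descent spectrum: the set of `λ` such that no `q` satisfies
`R((T-λ)^q) = R((T-λ)^{q+1})`, i.e. the descent of `T - λ` is infinite. -/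
def descentSpectrum (T : X →L[ℂ] X) : Set ℂ :=
  {l | ∀ q : ℕ, LinearMap.range (((shiftOp T l) ^ q : X →L[ℂ] X) : X →ₗ[ℂ] X) ≠ LinearMap.range (((shiftOp T l) ^ (q + 1) : X →L[ℂ] X) : X →ₗ[ℂ] X)}

/-- The quotient space `R(S^n) / R(S^{n+1})`. -/
abbrev rangeQuot (S : X →L[ℂ] X) (n : ℕ) : Type _ :=
  ↥(LinearMap.range ((S ^ n : X →L[ℂ] X) : X →ₗ[ℂ] X)) ⧸
    (Submodule.comap (LinearMap.range ((S ^ n : X →L[ℂ] X) : X →ₗ[ℂ] X)).subtype (LinearMap.range ((S ^ (n + 1) : X →L[ℂ] X) : X →ₗ[ℂ] X)))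

/-- The essential descent spectrum: the set of `λ` such that `c_n(T-λ) =
dim R((T-λ)^n)/R((T-λ)^{n+1})` is infinite for every `n`, i.e. `d_e(T-λ) = ∞`. -/
def essDescentSpectrum (T : X →L[ℂ] X) : Set ℂ :=
  {l | ∀ n : ℕ, ¬ FiniteDimensional ℂ (rangeQuot (shiftOp T l) n)}

namespace SupercyclicDescentAux

/-! ### Generic algebra helpers -/

section Algebra

variable {M : Type*} [AddCommGroup M] [Module ℂ M]

lemma fd_of_submodule_quot (W : Submodule ℂ M) (h1 : FiniteDimensional ℂ W)
    (h2 : FiniteDimensional ℂ (M ⧸ W)) : FiniteDimensional ℂ M := by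
  obtain ⟨q, hq⟩ := W.exists_isCompl
  haveI : FiniteDimensional ℂ q := (Submodule.quotientEquivOfIsCompl W q hq).finiteDimensional
  exact Module.Finite.equiv (Submodule.prodEquivOfIsCompl W q hq)

lemma exists_dual_pair (v w : M)
    (h : ∀ α β : ℂ, α • v + β • w = 0 → α = 0 ∧ β = 0) :
    ∃ Φ : M →ₗ[ℂ] ℂ × ℂ, Φ v = (1, 0) ∧ Φ w = (0, 1) := by
  have hli : LinearIndependent ℂ ![v, w] := LinearIndependent.pair_iff.mpr h
  set W := Submodule.span ℂ (Set.range ![v, w]) with hW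
  let b : Module.Basis (Fin 2) ℂ W := Module.Basis.span hli
  obtain ⟨q, hq⟩ := W.exists_isCompl
  let pr : M →ₗ[ℂ] W := W.linearProjOfIsCompl q hq
  have hvW : v ∈ W := by
    apply Submodule.subset_span
    exact ⟨0, by simp⟩
  have hwW : w ∈ W := by
    apply Submodule.subset_span
    exact ⟨1, by simp⟩
  have hb0c : ((b 0 : W) : M) = v := by
    rw [show ((b 0 : W) : M) = ![v, w] 0 from congrArg Subtype.val (Module.Basis.span_apply hli 0)]
    simp
  have hb1c : ((b 1 : W) : M) = w := by
    rw [show ((b 1 : W) : M) = ![v, w] 1 from congrArg Subtype.val (Module.Basis.span_apply hli 1)]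
    simp
  have hb0 : (⟨v, hvW⟩ : W) = b 0 := Subtype.ext hb0c.symm
  have hb1 : (⟨w, hwW⟩ : W) = b 1 := Subtype.ext hb1c.symm
  refine ⟨((b.coord 0).comp pr).prod ((b.coord 1).comp pr), ?_, ?_⟩
  · have hpr : pr v = ⟨v, hvW⟩ := Submodule.linearProjOfIsCompl_apply_left hq ⟨v, hvW⟩
    have : pr v = b 0 := by rw [hpr, hb0]
    simp only [LinearMap.prod_apply, LinearMap.comp_apply, this, Function.prod_apply]
    rw [Module.Basis.coord_apply, Module.Basis.coord_apply, Module.Basis.repr_self]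
    simp
  · have hpr : pr w = ⟨w, hwW⟩ := Submodule.linearProjOfIsCompl_apply_left hq ⟨w, hwW⟩
    have : pr w = b 1 := by rw [hpr, hb1]
    simp only [LinearMap.prod_apply, LinearMap.comp_apply, this, Function.prod_apply]
    rw [Module.Basis.coord_apply, Module.Basis.coord_apply, Module.Basis.repr_self]
    simp

end Algebra

/-! ### The planar curve `k ↦ (c l^k, c k l^(k-1))` is not dense. -/

lemma not_dense_curve (l : ℂ) :
    ¬ Dense {p : ℂ × ℂ | ∃ (c : ℂ) (k : ℕ), p = (c * l ^ k, c * ((k : ℂ) * l ^ (k - 1)))} := by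
  intro hd
  rcases eq_or_ne l 0 with rfl | hl
  · obtain ⟨p, hball, hp⟩ := (Metric.dense_iff.1 hd ((1 : ℂ), (1 : ℂ)) 1 one_pos)
    obtain ⟨c, k, rfl⟩ := hp
    have h1 : dist (c * (0 : ℂ) ^ k) (1 : ℂ) < 1 ∧
        dist (c * ((k : ℂ) * (0 : ℂ) ^ (k - 1))) (1 : ℂ) < 1 := by
      rw [Metric.mem_ball, Prod.dist_eq] at hball
      exact ⟨lt_of_le_of_lt le_sup_left hball, lt_of_le_of_lt le_sup_right hball⟩
    rcases k with _ | j
    · have h2 := h1.2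
      norm_num [dist_eq_norm] at h2
    · have h2 := h1.1
      norm_num [dist_eq_norm, zero_pow] at h2
  · -- l ≠ 0
    have hlpos : 0 < ‖l‖ := norm_pos_iff.2 hl
    set Mv : ℝ := ‖(1 : ℂ) / (2 * l)‖ with hMv
    have hMv0 : 0 ≤ Mv := norm_nonneg _
    set δ : ℝ := 1 / (2 * ‖l‖) with hδ
    have hδpos : 0 < δ := by positivity
    set ε : ℝ := min (1 / 2) (δ / (2 * Mv + 3)) with hε
    have hεpos : 0 < ε := by
      apply lt_min (by norm_num)
      positivity
    have hεhalf : ε ≤ 1 / 2 := min_le_left _ _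
    have hεδ : ε ≤ δ / (2 * Mv + 3) := min_le_right _ _
    obtain ⟨p, hball, hp⟩ := (Metric.dense_iff.1 hd ((1 : ℂ), 1 / (2 * l)) ε hεpos)
    obtain ⟨c, k, rfl⟩ := hp
    rw [Metric.mem_ball, Prod.dist_eq] at hball
    have h1 : ‖c * l ^ k - 1‖ < ε := by
      rw [← dist_eq_norm]
      exact lt_of_le_of_lt le_sup_left hball
    have h2 : ‖c * ((k : ℂ) * l ^ (k - 1)) - 1 / (2 * l)‖ < ε := by
      rw [← dist_eq_norm]
      exact lt_of_le_of_lt le_sup_right hball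
    set c' : ℂ := c * l ^ k with hc'
    set t : ℂ := (k : ℂ) / l with ht
    have hct : c * ((k : ℂ) * l ^ (k - 1)) = c' * t := by
      rcases k with _ | j
      · simp [hc', ht]
      · have : l ^ (j + 1) = l ^ j * l := pow_succ l j
        rw [hc', ht, Nat.add_sub_cancel, this, mul_div_assoc', eq_div_iff hl]
        ring
    rw [hct] at h2
    -- lower bound on ‖t - 1/(2l)‖
    have hlow : δ ≤ ‖t - 1 / (2 * l)‖ := by
      have : t - 1 / (2 * l) = (2 * (k : ℂ) - 1) / (2 * l) := by
        field_simp [ht]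
        rw [div_mul_eq_mul_div, div_mul_cancel₀ _ hl]
        ring
      rw [this, norm_div]
      have hnum : (1 : ℝ) ≤ ‖2 * (k : ℂ) - 1‖ := by
        rcases Nat.eq_zero_or_pos k with rfl | hk
        · norm_num
        · have hk1 : (1 : ℝ) ≤ (k : ℝ) := by exact_mod_cast hk
          have h2k : ‖(2 * (k : ℂ))‖ = 2 * (k : ℝ) := by
            rw [norm_mul]
            simp
          have hsn := norm_sub_norm_le (2 * (k : ℂ)) 1
          rw [h2k, norm_one] at hsn
          linarith
      have hden : ‖(2 : ℂ) * l‖ = 2 * ‖l‖ := by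
        rw [norm_mul]
        norm_num
      rw [hden, hδ]
      rw [div_le_div_iff₀ (by positivity) (by positivity)]
      nlinarith [hnum, hlpos]
    -- upper bounds
    have hc'norm : (1 : ℝ) / 2 ≤ ‖c'‖ := by
      have h3 := norm_sub_norm_le (1 : ℂ) c'
      rw [norm_one, norm_sub_rev] at h3
      linarith [h1.le, hεhalf]
    have hc't : ‖c' * t‖ ≤ Mv + ε := by
      have := norm_sub_norm_le (c' * t) (1 / (2 * l))
      rw [hMv]
      linarith [h2.le]
    have htnorm : ‖t‖ ≤ 2 * Mv + 1 := by
      have h5 : ‖c'‖ * ‖t‖ ≤ Mv + ε := by rw [← norm_mul]; exact hc't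
      nlinarith [norm_nonneg t, hεhalf]
    have hup : ‖t - 1 / (2 * l)‖ ≤ (2 * Mv + 2) * ε := by
      have h6 : t - 1 / (2 * l) = t * (1 - c') + (c' * t - 1 / (2 * l)) := by ring
      rw [h6]
      calc ‖t * (1 - c') + (c' * t - 1 / (2 * l))‖
          ≤ ‖t * (1 - c')‖ + ‖c' * t - 1 / (2 * l)‖ := norm_add_le _ _
        _ ≤ ‖t‖ * ‖1 - c'‖ + ε := by
            rw [norm_mul]
            exact add_le_add le_rfl h2.le
        _ ≤ (2 * Mv + 1) * ε + ε := by
            have h7 : ‖1 - c'‖ = ‖c' - 1‖ := norm_sub_rev _ _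
            have h8 : ‖t‖ * ‖1 - c'‖ ≤ (2 * Mv + 1) * ε := by
              rw [h7]
              apply mul_le_mul htnorm h1.le (norm_nonneg _) (by positivity)
            linarith
        _ = (2 * Mv + 2) * ε := by ring
    have : δ ≤ (2 * Mv + 2) * ε := le_trans hlow hup
    have hfinal : (2 * Mv + 2) * ε < δ := by
      have h9 : (2 * Mv + 2) * ε ≤ (2 * Mv + 2) * (δ / (2 * Mv + 3)) := by
        apply mul_le_mul_of_nonneg_left hεδ (by positivity)
      have h10 : (2 * Mv + 2) * (δ / (2 * Mv + 3)) < δ := by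
        rw [mul_div_assoc']
        rw [div_lt_iff₀ (by positivity)]
        nlinarith
      linarith
    linarith

/-! ### Analysis helpers -/

section Analysis

variable {E F : Type*} [NormedAddCommGroup E] [NormedSpace ℂ E]
  [NormedAddCommGroup F] [NormedSpace ℂ F]

/-- Lift of a continuous linear map to the (seminormed) quotient. -/
def quotLift (K : Submodule ℂ E) (B : E →L[ℂ] F) (h : K ≤ LinearMap.ker (B : E →ₗ[ℂ] F)) :
    (E ⧸ K) →L[ℂ] F := by
  refine LinearMap.mkContinuous (K.liftQ (B : E →ₗ[ℂ] F) h) (‖B‖ + 1) ?_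
  intro z
  have key : ∀ ε : ℝ, 0 < ε → ‖(K.liftQ (B : E →ₗ[ℂ] F) h) z‖ ≤ (‖B‖ + 1) * ‖z‖ + ε := by
    intro ε hε
    have hB1 : (0 : ℝ) < ‖B‖ + 1 := by positivity
    obtain ⟨m, hm, hmlt⟩ := Submodule.Quotient.norm_mk_lt z (div_pos hε hB1)
    have hzm : (K.liftQ (B : E →ₗ[ℂ] F) h) z = B m := by rw [← hm]; rfl
    rw [hzm]
    calc ‖B m‖ ≤ ‖B‖ * ‖m‖ := B.le_opNorm m
      _ ≤ (‖B‖ + 1) * ‖m‖ := by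
          apply mul_le_mul_of_nonneg_right (by linarith) (norm_nonneg _)
      _ ≤ (‖B‖ + 1) * (‖z‖ + ε / (‖B‖ + 1)) := by
          apply mul_le_mul_of_nonneg_left hmlt.le (by positivity)
      _ = (‖B‖ + 1) * ‖z‖ + ε := by field_simp
  exact le_of_forall_pos_le_add key

lemma quotLift_mk (K : Submodule ℂ E) (B : E →L[ℂ] F)
    (h : K ≤ LinearMap.ker (B : E →ₗ[ℂ] F)) (z : E) :
    quotLift K B h (Submodule.Quotient.mk z) = B z := rfl

/-- Kato's lemma: a range of finite codimension is closed. -/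
lemma isClosed_range_of_fd_quotient [CompleteSpace E] [CompleteSpace F]
    (B : E →L[ℂ] F) (hfd : FiniteDimensional ℂ (F ⧸ LinearMap.range (B : E →ₗ[ℂ] F))) :
    IsClosed ((LinearMap.range (B : E →ₗ[ℂ] F) : Submodule ℂ F) : Set F) := by
  obtain ⟨C, hC⟩ := (LinearMap.range (B : E →ₗ[ℂ] F) : Submodule ℂ F).exists_isCompl
  haveI : FiniteDimensional ℂ C :=
    (Submodule.quotientEquivOfIsCompl _ C hC).finiteDimensional
  set K : Submodule ℂ E := LinearMap.ker (B : E →ₗ[ℂ] F) with hK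
  haveI hKc : IsClosed (K : Set E) := by
    have : (K : Set E) = B ⁻¹' {0} := by
      ext z
      simp [hK, LinearMap.mem_ker]
    rw [this]
    exact isClosed_singleton.preimage B.continuous
  haveI : CompleteSpace C := FiniteDimensional.complete ℂ C
  let Bc : (E ⧸ K) →L[ℂ] F := quotLift K B le_rfl
  let Ψ : ((E ⧸ K) × C) →L[ℂ] F :=
    Bc.comp (ContinuousLinearMap.fst ℂ (E ⧸ K) C) +
      (C.subtypeL).comp (ContinuousLinearMap.snd ℂ (E ⧸ K) C)
  have hΨap : ∀ (d : E ⧸ K) (c : C), Ψ (d, c) = Bc d + (c : F) := fun d c => rfl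
  have hBcr : ∀ d : E ⧸ K, Bc d ∈ LinearMap.range (B : E →ₗ[ℂ] F) := by
    intro d
    obtain ⟨m, rfl⟩ := Submodule.mkQ_surjective K d
    rw [Submodule.mkQ_apply, quotLift_mk]
    exact ⟨m, rfl⟩
  have hker : LinearMap.ker (Ψ : ((E ⧸ K) × C) →ₗ[ℂ] F) = ⊥ := by
    rw [LinearMap.ker_eq_bot']
    rintro ⟨d, c⟩ hdc
    rw [ContinuousLinearMap.coe_coe, hΨap] at hdc
    have h1 : Bc d = -(c : F) := by linear_combination (norm := abel) hdc
    have h2 : Bc d ∈ LinearMap.range (B : E →ₗ[ℂ] F) := hBcr d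
    have h3 : Bc d ∈ C := by
      rw [h1]; exact C.neg_mem c.2
    have h4 : Bc d = 0 := by
      have := hC.disjoint
      rw [Submodule.disjoint_def] at this
      exact this _ h2 h3
    have hc0 : (c : F) = 0 := by
      rw [h4] at h1
      simpa using h1.symm
    obtain ⟨m, rfl⟩ := Submodule.mkQ_surjective K d
    have h5 : B m = 0 := by
      rw [Submodule.mkQ_apply] at h4
      rw [← quotLift_mk K B le_rfl m]
      exact h4
    have h6 : (Submodule.Quotient.mk m : E ⧸ K) = 0 :=
      (Submodule.Quotient.mk_eq_zero K).2 (LinearMap.mem_ker.2 h5)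
    rw [Prod.ext_iff]
    exact ⟨by simpa using h6, by simpa using Subtype.ext hc0⟩
  have hrange : LinearMap.range (Ψ : ((E ⧸ K) × C) →ₗ[ℂ] F) = ⊤ := by
    rw [eq_top_iff]
    rintro y -
    have hy : y ∈ (LinearMap.range (B : E →ₗ[ℂ] F) : Submodule ℂ F) ⊔ C := by
      rw [hC.sup_eq_top]; trivial
    rw [Submodule.mem_sup] at hy
    obtain ⟨u, ⟨m, rfl⟩, c, hc, rfl⟩ := hy
    exact ⟨(Submodule.Quotient.mk m, ⟨c, hc⟩), by simp only [ContinuousLinearMap.coe_coe]; rw [hΨap, quotLift_mk]⟩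
  let e := ContinuousLinearEquiv.ofBijective Ψ hker hrange
  have himg : ((LinearMap.range (B : E →ₗ[ℂ] F) : Submodule ℂ F) : Set F) =
      e '' ((Set.univ : Set (E ⧸ K)) ×ˢ ({0} : Set C)) := by
    ext y
    constructor
    · rintro ⟨m, rfl⟩
      refine ⟨(Submodule.Quotient.mk m, 0), ⟨Set.mem_univ _, rfl⟩, ?_⟩
      show Ψ (Submodule.Quotient.mk m, 0) = B m
      rw [hΨap, quotLift_mk]
      simp
    · rintro ⟨⟨d, c⟩, ⟨-, hc⟩, rfl⟩
      have hc0 : c = 0 := hc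
      subst hc0
      show Ψ (d, 0) ∈ _
      rw [hΨap]
      simpa using hBcr d
  rw [himg]
  exact e.toHomeomorph.isClosedMap _ (isClosed_univ.prod isClosed_singleton)

end Analysis

/-! ### The key identity and the main contradiction -/

section Main

variable (S : X →L[ℂ] X)

lemma mem_sup_iff_pow (n j : ℕ) (z : X) :
    z ∈ LinearMap.range ((S ^ j : X →L[ℂ] X) : X →ₗ[ℂ] X) ⊔ LinearMap.ker ((S ^ n : X →L[ℂ] X) : X →ₗ[ℂ] X) ↔
      (S ^ n) z ∈ LinearMap.range ((S ^ (n + j) : X →L[ℂ] X) : X →ₗ[ℂ] X) := by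
  constructor
  · intro hz
    rcases Submodule.mem_sup.1 hz with ⟨y, hy, w, hw, rfl⟩
    rcases hy with ⟨u, rfl⟩
    refine ⟨u, ?_⟩
    have hw' : (S ^ n) w = 0 := hw
    simp only [ContinuousLinearMap.coe_coe]
    rw [map_add, hw', add_zero, ← ContinuousLinearMap.mul_apply, ← pow_add]
  · rintro ⟨y, hy⟩
    apply Submodule.mem_sup.2
    refine ⟨(S ^ j) y, ⟨y, rfl⟩, z - (S ^ j) y, ?_, by abel⟩
    show (S ^ n) (z - (S ^ j) y) = 0
    simp only [ContinuousLinearMap.coe_coe] at hy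
    rw [map_sub, ← ContinuousLinearMap.mul_apply, ← pow_add, hy, sub_self]

lemma range_pow_succ_le (k : ℕ) :
    LinearMap.range ((S ^ (k + 1) : X →L[ℂ] X) : X →ₗ[ℂ] X) ≤ LinearMap.range ((S ^ k : X →L[ℂ] X) : X →ₗ[ℂ] X) := by
  rintro _ ⟨u, rfl⟩
  refine ⟨S u, ?_⟩
  simp only [ContinuousLinearMap.coe_coe]
  rw [← ContinuousLinearMap.mul_apply, ← pow_succ]

lemma ker_pow_le_succ (k : ℕ) :
    LinearMap.ker ((S ^ k : X →L[ℂ] X) : X →ₗ[ℂ] X) ≤ LinearMap.ker ((S ^ (k + 1) : X →L[ℂ] X) : X →ₗ[ℂ] X) := by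
  intro z hz
  have hz' : (S ^ k) z = 0 := hz
  show (S ^ (k + 1)) z = 0
  rw [pow_succ', ContinuousLinearMap.mul_apply, hz', map_zero]

variable [CompleteSpace X]

lemma descent_contra (l : ℂ) (x : X)
    (hx : Dense {y : X | ∃ (c : ℂ) (k : ℕ), y = c • ((S + l • (1 : X →L[ℂ] X)) ^ k) x})
    (n : ℕ)
    (hfd : FiniteDimensional ℂ
      (↥(LinearMap.range ((S ^ n : X →L[ℂ] X) : X →ₗ[ℂ] X)) ⧸
        (Submodule.comap (LinearMap.range ((S ^ n : X →L[ℂ] X) : X →ₗ[ℂ] X)).subtype (LinearMap.range ((S ^ (n + 1) : X →L[ℂ] X) : X →ₗ[ℂ] X)))))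
    (hd1 : LinearMap.range ((S ^ n : X →L[ℂ] X) : X →ₗ[ℂ] X) ≠ LinearMap.range ((S ^ (n + 1) : X →L[ℂ] X) : X →ₗ[ℂ] X))
    (hd2 : LinearMap.range ((S ^ (n + 1) : X →L[ℂ] X) : X →ₗ[ℂ] X) ≠ LinearMap.range ((S ^ (n + 2) : X →L[ℂ] X) : X →ₗ[ℂ] X)) : False := by
  classical
  set T : X →L[ℂ] X := S + l • (1 : X →L[ℂ] X) with hT
  have hTap : ∀ z : X, T z = S z + l • z := by
    intro z
    simp [hT]
  -- the three submodules
  set Q1 : Submodule ℂ X := LinearMap.range ((S ^ 1 : X →L[ℂ] X) : X →ₗ[ℂ] X) ⊔ LinearMap.ker ((S ^ n : X →L[ℂ] X) : X →ₗ[ℂ] X) with hQ1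
  set Q2 : Submodule ℂ X := LinearMap.range ((S ^ 1 : X →L[ℂ] X) : X →ₗ[ℂ] X) ⊔ LinearMap.ker ((S ^ (n + 1) : X →L[ℂ] X) : X →ₗ[ℂ] X) with hQ2
  set P : Submodule ℂ X := LinearMap.range ((S ^ 2 : X →L[ℂ] X) : X →ₗ[ℂ] X) ⊔ LinearMap.ker ((S ^ n : X →L[ℂ] X) : X →ₗ[ℂ] X) with hP
  have hmemQ1 : ∀ z : X, z ∈ Q1 ↔ (S ^ n) z ∈ LinearMap.range ((S ^ (n + 1) : X →L[ℂ] X) : X →ₗ[ℂ] X) :=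
    fun z => mem_sup_iff_pow S n 1 z
  have hmemQ2 : ∀ z : X, z ∈ Q2 ↔ (S ^ (n + 1)) z ∈ LinearMap.range ((S ^ (n + 2) : X →L[ℂ] X) : X →ₗ[ℂ] X) :=
    fun z => mem_sup_iff_pow S (n + 1) 1 z
  have hmemP : ∀ z : X, z ∈ P ↔ (S ^ n) z ∈ LinearMap.range ((S ^ (n + 2) : X →L[ℂ] X) : X →ₗ[ℂ] X) :=
    fun z => mem_sup_iff_pow S n 2 z
  -- Step 1 : X ⧸ Q1 is finite dimensional
  have fdQ1 : FiniteDimensional ℂ (X ⧸ Q1) := by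
    set C1 := Submodule.comap (LinearMap.range ((S ^ n : X →L[ℂ] X) : X →ₗ[ℂ] X)).subtype (LinearMap.range ((S ^ (n + 1) : X →L[ℂ] X) : X →ₗ[ℂ] X))
      with hC1
    let g : X →ₗ[ℂ] (↥(LinearMap.range ((S ^ n : X →L[ℂ] X) : X →ₗ[ℂ] X)) ⧸ C1) :=
      C1.mkQ.comp (((S ^ n : X →L[ℂ] X) : X →ₗ[ℂ] X).codRestrict (LinearMap.range ((S ^ n : X →L[ℂ] X) : X →ₗ[ℂ] X))
        (fun z => ⟨z, rfl⟩))
    have hgs : Function.Surjective g := by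
      intro w
      obtain ⟨⟨y, hy⟩, rfl⟩ := Submodule.mkQ_surjective C1 w
      obtain ⟨u, rfl⟩ := hy
      exact ⟨u, rfl⟩
    have hgker : LinearMap.ker g = Q1 := by
      ext z
      rw [hmemQ1 z]
      simp only [g, LinearMap.mem_ker, LinearMap.comp_apply, Submodule.mkQ_apply,
        Submodule.Quotient.mk_eq_zero, Submodule.mem_comap, Submodule.subtype_apply,
        LinearMap.codRestrict_apply]
      rfl
    have e := LinearMap.quotKerEquivOfSurjective g hgs
    rw [hgker] at e
    exact e.symm.finiteDimensional
  -- Step 2 : X ⧸ Q2 is finite dimensional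
  have hQ12 : Q1 ≤ Q2 := sup_le_sup_left (ker_pow_le_succ S n) _
  have fdQ2 : FiniteDimensional ℂ (X ⧸ Q2) := by
    let m : (X ⧸ Q1) →ₗ[ℂ] (X ⧸ Q2) :=
      Submodule.mapQ Q1 Q2 LinearMap.id (fun z hz => hQ12 hz)
    have hms : Function.Surjective m := by
      intro w
      obtain ⟨y, rfl⟩ := Submodule.mkQ_surjective Q2 w
      exact ⟨Submodule.Quotient.mk y, by rw [Submodule.mkQ_apply, Submodule.mapQ_apply]; rfl⟩
    exact Module.Finite.of_surjective m hms
  -- Step 3 : X ⧸ P is finite dimensional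
  have hPQ1 : P ≤ Q1 := by
    apply sup_le_sup_right
    have := range_pow_succ_le S 1
    simpa using this
  have fdXP : FiniteDimensional ℂ (X ⧸ P) := by
    set f : X →ₗ[ℂ] (X ⧸ P) := P.mkQ.comp (S : X →ₗ[ℂ] X) with hf
    have hfker : LinearMap.ker f = Q2 := by
      ext z
      rw [hmemQ2 z]
      simp only [f, LinearMap.mem_ker, LinearMap.comp_apply, Submodule.mkQ_apply,
        Submodule.Quotient.mk_eq_zero]
      show S z ∈ P ↔ (S ^ (n + 1)) z ∈ LinearMap.range ((S ^ (n + 2) : X →L[ℂ] X) : X →ₗ[ℂ] X)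
      rw [hmemP (S z)]
      have : (S ^ n) (S z) = (S ^ (n + 1)) z := by
        rw [pow_succ, ContinuousLinearMap.mul_apply]
      rw [this]
    have hfrange : LinearMap.range f = Q1.map P.mkQ := by
      apply le_antisymm
      · rintro _ ⟨u, rfl⟩
        refine ⟨S u, ?_, rfl⟩
        apply Submodule.mem_sup_left
        exact ⟨u, by simp [pow_one]⟩
      · rintro _ ⟨u, hu, rfl⟩
        rcases Submodule.mem_sup.1 hu with ⟨y, hy, w, hw, rfl⟩
        rcases hy with ⟨a, rfl⟩
        have hwP : w ∈ P := Submodule.mem_sup_right hw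
        refine ⟨a, ?_⟩
        have : ((S ^ 1 : X →L[ℂ] X) : X →ₗ[ℂ] X) a = S a := by simp [pow_one]
        simp only [f, LinearMap.comp_apply, Submodule.mkQ_apply]
        rw [Submodule.Quotient.mk_add, (Submodule.Quotient.mk_eq_zero P).2 hwP, add_zero, this]
        rfl
    have fdW : FiniteDimensional ℂ (Q1.map P.mkQ) := by
      have e := LinearMap.quotKerEquivRange f
      rw [hfker, hfrange] at e
      exact e.finiteDimensional
    have fdQuot : FiniteDimensional ℂ ((X ⧸ P) ⧸ Q1.map P.mkQ) :=
      (Submodule.quotientQuotientEquivQuotient P Q1 hPQ1).symm.finiteDimensional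
    exact fd_of_submodule_quot (Q1.map P.mkQ) fdW fdQuot
  -- Step 4 : P is closed
  set K : Submodule ℂ X := LinearMap.ker ((S ^ n : X →L[ℂ] X) : X →ₗ[ℂ] X) with hKdef
  haveI hKc : IsClosed (K : Set X) := by
    have : (K : Set X) = (S ^ n) ⁻¹' {0} := by
      ext z
      simp only [hKdef, SetLike.mem_coe, LinearMap.mem_ker, ContinuousLinearMap.coe_coe, Set.mem_preimage, Set.mem_singleton_iff]
    rw [this]
    exact isClosed_singleton.preimage (S ^ n).continuous
  have hKP : K ≤ P := le_sup_right
  let πK : X →L[ℂ] (X ⧸ K) :=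
    LinearMap.mkContinuous K.mkQ 1 (fun z => by
      simpa using Submodule.Quotient.norm_mk_le K z)
  have hπK : ∀ z : X, πK z = Submodule.Quotient.mk z := fun z => rfl
  let B : X →L[ℂ] (X ⧸ K) := πK.comp (S ^ 2)
  have hBrange : LinearMap.range (B : X →ₗ[ℂ] (X ⧸ K)) = P.map K.mkQ := by
    apply le_antisymm
    · rintro _ ⟨u, rfl⟩
      refine ⟨(S ^ 2) u, Submodule.mem_sup_left ⟨u, rfl⟩, rfl⟩
    · rintro _ ⟨u, hu, rfl⟩
      rcases Submodule.mem_sup.1 hu with ⟨y, hy, w, hw, rfl⟩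
      rcases hy with ⟨a, rfl⟩
      refine ⟨a, ?_⟩
      show πK ((S ^ 2) a) = Submodule.Quotient.mk ((S ^ 2) a + w)
      rw [hπK]
      rw [Submodule.Quotient.mk_add, (Submodule.Quotient.mk_eq_zero K).2 hw, add_zero]
  have fdYB : FiniteDimensional ℂ ((X ⧸ K) ⧸ LinearMap.range (B : X →ₗ[ℂ] (X ⧸ K))) := by
    rw [hBrange]
    exact (Submodule.quotientQuotientEquivQuotient K P hKP).symm.finiteDimensional
  have hVcl : IsClosed ((LinearMap.range (B : X →ₗ[ℂ] (X ⧸ K)) : Submodule ℂ (X ⧸ K)) : Set (X ⧸ K)) :=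
    isClosed_range_of_fd_quotient B fdYB
  haveI hPc : IsClosed (P : Set X) := by
    have hPpre : (P : Set X) = πK ⁻¹' ((LinearMap.range (B : X →ₗ[ℂ] (X ⧸ K)) : Submodule ℂ (X ⧸ K)) : Set (X ⧸ K)) := by
      ext z
      simp only [Set.mem_preimage, SetLike.mem_coe]
      constructor
      · intro hz
        rw [hBrange]
        exact ⟨z, hz, (hπK z).symm⟩
      · intro hz
        rw [hBrange] at hz
        obtain ⟨u, hu, huz⟩ := hz
        have : z - u ∈ K := by
          rw [← Submodule.Quotient.eq]
          rw [hπK] at huz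
          exact huz.symm
        have : z = u + (z - u) := by abel
        rw [this]
        exact P.add_mem hu (hKP ‹z - u ∈ K›)
    rw [hPpre]
    exact hVcl.preimage πK.continuous
  -- Step 5 : induced operators on Z = X ⧸ P
  have hcommS : ∀ (k : ℕ) (z : X), (S ^ k) (S z) = S ((S ^ k) z) := by
    intro k z
    calc (S ^ k) (S z) = (S ^ k * S) z := rfl
      _ = (S ^ (k + 1)) z := by rw [pow_succ]
      _ = (S * S ^ k) z := by rw [pow_succ']
      _ = S ((S ^ k) z) := rfl
  have hSP : ∀ z ∈ P, S z ∈ P := by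
    intro z hz
    rcases Submodule.mem_sup.1 hz with ⟨y, hy, w, hw, rfl⟩
    rcases hy with ⟨a, rfl⟩
    rw [map_add]
    apply P.add_mem
    · exact Submodule.mem_sup_left ⟨S a, hcommS 2 a⟩
    · apply Submodule.mem_sup_right
      have hw' : (S ^ n) w = 0 := hw
      show (S ^ n) (S w) = 0
      rw [hcommS n w, hw', map_zero]
  have hTP : ∀ z ∈ P, T z ∈ P := by
    intro z hz
    rw [hTap]
    exact P.add_mem (hSP z hz) (P.smul_mem l hz)
  let A : (X ⧸ P) →ₗ[ℂ] (X ⧸ P) :=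
    Submodule.mapQ P P (T : X →ₗ[ℂ] X) (fun z hz => hTP z hz)
  let NL : (X ⧸ P) →ₗ[ℂ] (X ⧸ P) :=
    Submodule.mapQ P P (S : X →ₗ[ℂ] X) (fun z hz => hSP z hz)
  have hAmk : ∀ z : X, A (Submodule.Quotient.mk z) = Submodule.Quotient.mk (T z) :=
    fun z => rfl
  have hNmk : ∀ z : X, NL (Submodule.Quotient.mk z) = Submodule.Quotient.mk (S z) :=
    fun z => rfl
  have hAdec : ∀ w : X ⧸ P, A w = l • w + NL w := by
    intro w
    obtain ⟨z, rfl⟩ := Submodule.mkQ_surjective P w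
    rw [Submodule.mkQ_apply, hAmk, hNmk, hTap]
    rw [← Submodule.Quotient.mk_smul, ← Submodule.Quotient.mk_add]
    congr 1
    abel
  have hN2 : ∀ w : X ⧸ P, NL (NL w) = 0 := by
    intro w
    obtain ⟨z, rfl⟩ := Submodule.mkQ_surjective P w
    rw [Submodule.mkQ_apply, hNmk, hNmk]
    apply (Submodule.Quotient.mk_eq_zero P).2
    apply Submodule.mem_sup_left
    refine ⟨z, ?_⟩
    rw [ContinuousLinearMap.coe_coe, pow_two, ContinuousLinearMap.mul_apply]
  -- orbit in the quotient is dense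
  set v : X ⧸ P := Submodule.Quotient.mk x with hv
  have hAk : ∀ (k : ℕ) (z : X), (A ^ k) (Submodule.Quotient.mk z)
      = Submodule.Quotient.mk ((T ^ k) z) := by
    intro k
    induction k with
    | zero => intro z; simp
    | succ k ih =>
      intro z
      rw [pow_succ, Module.End.mul_apply, hAmk, ih (T z), pow_succ,
        ContinuousLinearMap.mul_apply]
  have hAk' : ∀ (k : ℕ) (z : X), (A ^ k) (Submodule.Quotient.mk z)
      = Submodule.Quotient.mk ((T ^ k) z) := hAk
  have hdenseZ : Dense {w : X ⧸ P | ∃ (c : ℂ) (k : ℕ), w = c • ((A ^ k) v)} := by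
    have hsurj : Function.Surjective (Submodule.Quotient.mk : X → X ⧸ P) :=
      Submodule.mkQ_surjective P
    have hcont : Continuous (Submodule.Quotient.mk : X → X ⧸ P) := by
      have : Continuous πK → True := fun _ => trivial
      let πP : X →L[ℂ] (X ⧸ P) :=
        LinearMap.mkContinuous P.mkQ 1 (fun z => by
          simpa using Submodule.Quotient.norm_mk_le P z)
      exact πP.continuous
    have himg := hsurj.denseRange.dense_image hcont hx
    apply himg.mono
    rintro _ ⟨_, ⟨c, k, rfl⟩, rfl⟩
    refine ⟨c, k, ?_⟩
    rw [Submodule.Quotient.mk_smul, hv, hAk k x]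
  -- the explicit orbit formula
  set w : X ⧸ P := NL v with hwdef
  have hpow1 : ∀ k : ℕ, ((k : ℂ) * l ^ (k - 1)) * l = (k : ℂ) * l ^ k := by
    intro k
    rcases k with _ | j
    · simp
    · simp only [Nat.add_sub_cancel]
      push_cast
      ring
  have hform : ∀ k : ℕ, (A ^ k) v = l ^ k • v + ((k : ℂ) * l ^ (k - 1)) • w := by
    intro k
    induction k with
    | zero => simp
    | succ k ih =>
      have hNw : NL w = 0 := hN2 v
      have hstep : (A ^ (k + 1)) v = A ((A ^ k) v) := by
        rw [pow_succ', Module.End.mul_apply]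
      have hk1 : ((k + 1 : ℕ) : ℂ) * l ^ ((k + 1) - 1) = l ^ k + (k : ℂ) * l ^ k := by
        simp only [Nat.add_sub_cancel]
        push_cast
        ring
      rw [hstep, ih, map_add, map_smul, map_smul, hAdec v, hAdec w, hNw, add_zero, hk1,
        ← hwdef]
      rw [smul_add, smul_smul, smul_smul, hpow1 k, ← pow_succ, add_smul]
      abel
  -- two independent vectors in X ⧸ P
  have hle1 : LinearMap.range ((S ^ (n + 1) : X →L[ℂ] X) : X →ₗ[ℂ] X) ≤ LinearMap.range ((S ^ n : X →L[ℂ] X) : X →ₗ[ℂ] X) := range_pow_succ_le S n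
  have hle2 : LinearMap.range ((S ^ (n + 2) : X →L[ℂ] X) : X →ₗ[ℂ] X) ≤ LinearMap.range ((S ^ (n + 1) : X →L[ℂ] X) : X →ₗ[ℂ] X) :=
    range_pow_succ_le S (n + 1)
  obtain ⟨a, haSn, haS1⟩ := SetLike.exists_of_lt (lt_of_le_of_ne hle1 (Ne.symm hd1))
  obtain ⟨b, hbSn, hbS1⟩ := SetLike.exists_of_lt (lt_of_le_of_ne hle2 (Ne.symm hd2))
  obtain ⟨xa, hxa⟩ := haSn
  have hbmem := hbSn
  obtain ⟨xb, hxb⟩ := hbmem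
  set u₁ : X ⧸ P := Submodule.Quotient.mk xa with hu₁
  set u₂ : X ⧸ P := Submodule.Quotient.mk (S xb) with hu₂
  have hind : ∀ α β : ℂ, α • u₁ + β • u₂ = 0 → α = 0 ∧ β = 0 := by
    intro α β hαβ
    rw [hu₁, hu₂, ← Submodule.Quotient.mk_smul, ← Submodule.Quotient.mk_smul,
      ← Submodule.Quotient.mk_add] at hαβ
    have hmem : α • xa + β • S xb ∈ P := (Submodule.Quotient.mk_eq_zero P).1 hαβ
    rw [hmemP] at hmem
    have hSnb : (S ^ n) (S xb) = b := by
      calc (S ^ n) (S xb) = (S ^ n * S) xb := rfl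
        _ = (S ^ (n + 1)) xb := by rw [pow_succ]
        _ = b := hxb
    have hcomp : (S ^ n) (α • xa + β • S xb) = α • a + β • b := by
      rw [ContinuousLinearMap.coe_coe] at hxa
      rw [map_add, map_smul, map_smul, hxa, hSnb]
    rw [hcomp] at hmem
    have hα : α = 0 := by
      by_contra hα0
      apply haS1
      have h1 : a = α⁻¹ • (α • a + β • b) - (α⁻¹ * β) • b := by
        rw [smul_add, smul_smul, smul_smul, inv_mul_cancel₀ hα0, one_smul, mul_smul]
        abel
      rw [h1]
      apply Submodule.sub_mem
      · exact (LinearMap.range ((S ^ (n + 1) : X →L[ℂ] X) : X →ₗ[ℂ] X)).smul_mem _ (hle2 hmem)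
      · exact (LinearMap.range ((S ^ (n + 1) : X →L[ℂ] X) : X →ₗ[ℂ] X)).smul_mem _ hbSn
    refine ⟨hα, ?_⟩
    rw [hα, zero_smul, zero_add] at hmem
    by_contra hβ0
    apply hbS1
    have h2 : b = β⁻¹ • (β • b) := by
      rw [smul_smul, inv_mul_cancel₀ hβ0, one_smul]
    rw [h2]
    exact (LinearMap.range ((S ^ (n + 2) : X →L[ℂ] X) : X →ₗ[ℂ] X)).smul_mem _ hmem
  haveI : FiniteDimensional ℂ (X ⧸ P) := fdXP
  -- case analysis on w = NL v
  rcases eq_or_ne w 0 with hw0 | hwne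
  · -- orbit lies in the line spanned by v
    have hsub : {z : X ⧸ P | ∃ (c : ℂ) (k : ℕ), z = c • ((A ^ k) v)} ⊆
        (Submodule.span ℂ {v} : Set (X ⧸ P)) := by
      rintro _ ⟨c, k, rfl⟩
      rw [hform k, hw0, smul_zero, add_zero, smul_smul]
      exact Submodule.smul_mem _ _ (Submodule.mem_span_singleton_self v)
    have hclosed : IsClosed ((Submodule.span ℂ {v} : Submodule ℂ (X ⧸ P)) : Set (X ⧸ P)) :=
      Submodule.closed_of_finiteDimensional _
    have huniv : ∀ z : X ⧸ P, z ∈ Submodule.span ℂ ({v} : Set (X ⧸ P)) := by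
      intro z
      have h1 : closure {z : X ⧸ P | ∃ (c : ℂ) (k : ℕ), z = c • ((A ^ k) v)} = Set.univ :=
        hdenseZ.closure_eq
      have h2 : (Set.univ : Set (X ⧸ P)) ⊆
          ((Submodule.span ℂ {v} : Submodule ℂ (X ⧸ P)) : Set (X ⧸ P)) := by
        rw [← h1]
        calc closure {z : X ⧸ P | ∃ (c : ℂ) (k : ℕ), z = c • ((A ^ k) v)}
            ⊆ closure ((Submodule.span ℂ {v} : Submodule ℂ (X ⧸ P)) : Set (X ⧸ P)) :=
              closure_mono hsub
          _ = _ := hclosed.closure_eq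
      exact h2 (Set.mem_univ z)
    obtain ⟨ca, hca⟩ := Submodule.mem_span_singleton.1 (huniv u₁)
    obtain ⟨cb, hcb⟩ := Submodule.mem_span_singleton.1 (huniv u₂)
    have h3 : cb • u₁ + (-ca) • u₂ = 0 := by
      rw [← hca, ← hcb, smul_smul, smul_smul, ← add_smul]
      have hco : cb * ca + -ca * cb = 0 := by ring
      rw [hco, zero_smul]
    obtain ⟨h4, h5⟩ := hind cb (-ca) h3
    have h6 : u₁ = 0 := by
      rw [← hca]
      have : ca = 0 := by simpa using h5
      rw [this, zero_smul]
    obtain ⟨h7, -⟩ := hind 1 0 (by rw [h6, one_smul, zero_smul, add_zero])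
    exact one_ne_zero h7
  · -- v and w are independent; project to ℂ²
    have hvw : ∀ α β : ℂ, α • v + β • w = 0 → α = 0 ∧ β = 0 := by
      intro α β hαβ
      have h1 : NL (α • v + β • w) = 0 := by rw [hαβ, map_zero]
      rw [map_add, map_smul, map_smul, ← hwdef, hN2 v, smul_zero, add_zero] at h1
      have hα : α = 0 := by
        by_contra hα0
        apply hwne
        have := congrArg (fun z => α⁻¹ • z) h1
        simpa [smul_smul, inv_mul_cancel₀ hα0] using this
      refine ⟨hα, ?_⟩
      rw [hα, zero_smul, zero_add] at hαβ
      by_contra hβ0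
      apply hwne
      have := congrArg (fun z => β⁻¹ • z) hαβ
      simpa [smul_smul, inv_mul_cancel₀ hβ0] using this
    obtain ⟨Φ, hΦv, hΦw⟩ := exists_dual_pair v w hvw
    have hΦcont : Continuous Φ := Φ.continuous_of_finiteDimensional
    have hΦsurj : Function.Surjective Φ := by
      intro p
      refine ⟨p.1 • v + p.2 • w, ?_⟩
      rw [map_add, map_smul, map_smul, hΦv, hΦw]
      ext <;> simp
    have hdense2 : Dense (Φ '' {z : X ⧸ P | ∃ (c : ℂ) (k : ℕ), z = c • ((A ^ k) v)}) :=
      hΦsurj.denseRange.dense_image hΦcont hdenseZ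
    have hsub2 : Φ '' {z : X ⧸ P | ∃ (c : ℂ) (k : ℕ), z = c • ((A ^ k) v)} ⊆
        {p : ℂ × ℂ | ∃ (c : ℂ) (k : ℕ), p = (c * l ^ k, c * ((k : ℂ) * l ^ (k - 1)))} := by
      rintro _ ⟨_, ⟨c, k, rfl⟩, rfl⟩
      refine ⟨c, k, ?_⟩
      rw [map_smul, hform k, map_add, map_smul, map_smul, hΦv, hΦw]
      ext
      · simp
      · simp
    exact not_dense_curve l (hdense2.mono hsub2)

end Main

end SupercyclicDescentAux

/-- If `T` is a supercyclic bounded operator on a complex Banach space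
`X` (i.e. for some `x ∈ X` the homogeneous orbit `{λ Tⁿ x : λ ∈ ℂ, n ∈ ℕ}` is dense),
then `σ_desc(T) = σ_desc^e(T)`. -/
theorem supercyclic_descentSpectrum_eq_essDescentSpectrum
    {X : Type*} [NormedAddCommGroup X] [NormedSpace ℂ X] [CompleteSpace X]
    (T : X →L[ℂ] X)
    (hsc : ∃ x : X, Dense {y : X | ∃ (c : ℂ) (n : ℕ), y = c • (T ^ n) x}) :
    descentSpectrum T = essDescentSpectrum T := by
  obtain ⟨x, hx⟩ := hsc
  ext l
  simp only [descentSpectrum, essDescentSpectrum, Set.mem_setOf_eq]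
  constructor
  · intro hdesc n hfd
    have hST : shiftOp T l + l • (1 : X →L[ℂ] X) = T := by
      rw [shiftOp, sub_add_cancel]
    apply SupercyclicDescentAux.descent_contra (shiftOp T l) l x ?_ n hfd (hdesc n)
      (hdesc (n + 1))
    rw [hST]
    exact hx
  · intro hess q hq
    apply hess q
    have htop : Submodule.comap (LinearMap.range (((shiftOp T l) ^ q : X →L[ℂ] X) : X →ₗ[ℂ] X)).subtype
        (LinearMap.range (((shiftOp T l) ^ (q + 1) : X →L[ℂ] X) : X →ₗ[ℂ] X)) = ⊤ := by
      rw [eq_top_iff]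
      rintro ⟨y, hy⟩ -
      show y ∈ LinearMap.range (((shiftOp T l) ^ (q + 1) : X →L[ℂ] X) : X →ₗ[ℂ] X)
      rw [← hq]
      exact hy
    haveI : Subsingleton (rangeQuot (shiftOp T l) q) :=
      Submodule.Quotient.subsingleton_iff.2 htop
    infer_instance
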